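/- Let G be a simple graph on a finite vertex type V and let k be a natural number. Let u : (V × Bool) → (V × Bool) → ℝ be a symmetric function such that for all distinct a, b ∈ V × Bool: u(a,b) = −1 if the first coordinates of a and b are equal or are adjacent in G, and u(a,b) ≥ 0 otherwise. Then the following are equivalent: (i) there exists a finite set A ⊆ V × Bool such that the number of elements of A with second coordinate true equals the number of elements with second coordinate false, this common number is at most k, and the sum of u over all unordered pairs of distinct elements of A is at most −k·(2k−1); (ii) G contains a clique on k vertices. -/

import Mathlib

/-- Correctness of the reduction from `clique` to `k`-charge removal for controllable
energy functions.  Every vertex `v` of `G` is doubled into a positive ion `(v, true)` and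
a negative ion `(v, false)`; the pairwise energy `u` is `−1` between ions representing
equal or adjacent vertices of `G` and nonnegative otherwise.  Then there is a neutral set
`A` of at most `k` positive (and as many negative) ions whose total energy, summed over
unordered pairs of distinct ions, is at most `−k·(2k−1)` iff `G` has a clique on `k`
vertices. -/
theorem kChargeRemoval_clique_reduction {V : Type*} [Fintype V] [DecidableEq V]
    (G : SimpleGraph V) (k : ℕ) (u : V × Bool → V × Bool → ℝ)
    (hsymm : ∀ a b, u a b = u b a)
    (hneg : ∀ a b : V × Bool, a ≠ b → (a.1 = b.1 ∨ G.Adj a.1 b.1) → u a b = -1)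
    (hpos : ∀ a b : V × Bool, a ≠ b → ¬(a.1 = b.1 ∨ G.Adj a.1 b.1) → 0 ≤ u a b) :
    (∃ A : Finset (V × Bool),
        (A.filter fun p => p.2 = true).card = (A.filter fun p => p.2 = false).card ∧
        (A.filter fun p => p.2 = true).card ≤ k ∧
        (∑ p ∈ A.offDiag, u p.1 p.2) / 2 ≤ -((k : ℝ) * (2 * (k : ℝ) - 1))) ↔
      ∃ S : Finset V, G.IsNClique k S := by
  constructor
  · rintro ⟨A, h1, h2, h3⟩
    set m := (A.filter fun p => p.2 = true).card with hm
    have hcardA : A.card = 2 * m := by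
      have h := Finset.card_filter_add_card_filter_not
        (s := A) (p := fun p => p.2 = true)
      simp only [Bool.not_eq_true] at h
      omega
    have hge : ∀ p ∈ A.offDiag, (-1 : ℝ) ≤ u p.1 p.2 := by
      intro p hp
      rw [Finset.mem_offDiag] at hp
      by_cases h : p.1.1 = p.2.1 ∨ G.Adj p.1.1 p.2.1
      · rw [hneg _ _ hp.2.2 h]
      · linarith [hpos _ _ hp.2.2 h]
    have hsum_ge : -(A.offDiag.card : ℝ) ≤ ∑ p ∈ A.offDiag, u p.1 p.2 := by
      calc -(A.offDiag.card : ℝ) = ∑ _p ∈ A.offDiag, (-1 : ℝ) := by simp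
      _ ≤ _ := Finset.sum_le_sum hge
    have hsub : 2 * m ≤ 2 * m * (2 * m) := by nlinarith
    have hocR : (A.offDiag.card : ℝ) = 2 * m * (2 * m) - 2 * m := by
      rw [Finset.offDiag_card, hcardA, Nat.cast_sub hsub]
      push_cast; ring
    have hsum_le : ∑ p ∈ A.offDiag, u p.1 p.2 ≤ -(2 * (k : ℝ) * (2 * k - 1)) := by
      linarith
    have hkm : k ≤ m := by
      by_contra hc
      push_neg at hc
      have hmk : (m : ℝ) + 1 ≤ (k : ℝ) := by exact_mod_cast hc
      have hm0 : (0 : ℝ) ≤ (m : ℝ) := Nat.cast_nonneg m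
      nlinarith
    have hmk : m = k := le_antisymm h2 hkm
    subst hmk
    have hsum_eq : ∑ p ∈ A.offDiag, u p.1 p.2 = -(A.offDiag.card : ℝ) := by
      have : -(A.offDiag.card : ℝ) = -(2 * (m : ℝ) * (2 * m - 1)) := by
        rw [hocR]; ring
      linarith
    have hall : ∀ p ∈ A.offDiag, p.1.1 = p.2.1 ∨ G.Adj p.1.1 p.2.1 := by
      intro p hp
      by_contra h
      have hne : p.1 ≠ p.2 := (Finset.mem_offDiag.1 hp).2.2
      have h0 : 0 ≤ u p.1 p.2 := hpos _ _ hne h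
      have hsplit : u p.1 p.2 + ∑ q ∈ A.offDiag.erase p, u q.1 q.2
          = ∑ q ∈ A.offDiag, u q.1 q.2 :=
        Finset.add_sum_erase A.offDiag (fun q => u q.1 q.2) hp
      have hrest : -((A.offDiag.erase p).card : ℝ) ≤ ∑ q ∈ A.offDiag.erase p, u q.1 q.2 := by
        calc -((A.offDiag.erase p).card : ℝ) = ∑ _q ∈ A.offDiag.erase p, (-1 : ℝ) := by simp
        _ ≤ _ := Finset.sum_le_sum fun q hq => hge q (Finset.mem_of_mem_erase hq)
      have hcard : ((A.offDiag.erase p).card : ℝ) = (A.offDiag.card : ℝ) - 1 := by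
        rw [Finset.card_erase_of_mem hp, Nat.cast_sub (Finset.card_pos.2 ⟨p, hp⟩)]
        simp
      rw [hcard] at hrest
      linarith [hsum_eq]
    set S := A.image Prod.fst with hS
    have hclique : G.IsClique (S : Set V) := by
      intro v hv w hw hvw
      simp only [hS, Finset.coe_image, Set.mem_image, Finset.mem_coe] at hv hw
      obtain ⟨a, ha, rfl⟩ := hv
      obtain ⟨b, hb, rfl⟩ := hw
      have hab : a ≠ b := fun h => hvw (by rw [h])
      have hmem : (a, b) ∈ A.offDiag := Finset.mem_offDiag.2 ⟨ha, hb, hab⟩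
      rcases hall _ hmem with h | h
      · exact absurd h hvw
      · exact h
    have hcardS : m ≤ S.card := by
      have hfib : ∀ v ∈ A.image Prod.fst,
          (A.filter fun x => x.1 = v).card ≤ 2 := by
        intro v _
        have : (A.filter fun x => x.1 = v) ⊆ {(v, true), (v, false)} := by
          intro x hx
          simp only [Finset.mem_filter] at hx
          simp only [Finset.mem_insert, Finset.mem_singleton]
          rcases Bool.eq_false_or_eq_true x.2 with h | h
          · left; rw [← hx.2, ← h]
          · right; rw [← hx.2, ← h]
        calc (A.filter fun x => x.1 = v).card ≤ ({(v, true), (v, false)} : Finset (V × Bool)).card :=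
              Finset.card_le_card this
          _ ≤ 2 := Finset.card_insert_le _ _ |>.trans (by simp)
      have h2' := Finset.card_le_mul_card_image (f := Prod.fst) (s := A) (n := 2) hfib
      rw [← hS] at h2'
      omega
    obtain ⟨T, hTS, hT⟩ := Finset.exists_subset_card_eq (s := S) hcardS
    exact ⟨T, hclique.subset (by exact_mod_cast hTS), hT⟩
  · rintro ⟨S, hS⟩
    refine ⟨S ×ˢ Finset.univ, ?_, ?_, ?_⟩
    all_goals
      have ht : ((S ×ˢ (Finset.univ : Finset Bool)).filter fun p => p.2 = true)
          = S ×ˢ {true} := by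
        ext ⟨v, b⟩
        simp only [Finset.mem_filter, Finset.mem_product, Finset.mem_singleton,
          Finset.mem_univ, and_true, true_and]
      have hf : ((S ×ˢ (Finset.univ : Finset Bool)).filter fun p => p.2 = false)
          = S ×ˢ {false} := by
        ext ⟨v, b⟩
        simp only [Finset.mem_filter, Finset.mem_product, Finset.mem_singleton,
          Finset.mem_univ, and_true, true_and]
    · rw [ht, hf]; simp
    · rw [ht, Finset.card_product, Finset.card_singleton, mul_one, hS.2]
    · have hall : ∀ p ∈ (S ×ˢ (Finset.univ : Finset Bool)).offDiag, u p.1 p.2 = -1 := by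
        intro p hp
        rw [Finset.mem_offDiag] at hp
        obtain ⟨hp1, hp2, hne⟩ := hp
        apply hneg _ _ hne
        rcases eq_or_ne p.1.1 p.2.1 with h | h
        · exact Or.inl h
        · exact Or.inr (hS.1 (Finset.mem_product.1 hp1).1 (Finset.mem_product.1 hp2).1 h)
      rw [Finset.sum_congr rfl hall, Finset.sum_const, Finset.offDiag_card,
        Finset.card_product, Finset.card_univ, Fintype.card_bool, hS.2]
      have hsub : k * 2 ≤ k * 2 * (k * 2) := by nlinarith
      rw [nsmul_eq_mul, Nat.cast_sub hsub]
      push_cast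
      nlinarith [sq_nonneg (k : ℝ)]
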